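/- Let N ≥ 2, δ ∈ (0,1), and let u : {0,1,…,N} → ℝ³ satisfy ‖u^i‖ = 1 for all i and the periodic boundary condition ⟨u¹,u⁰⟩ = ⟨u^N,u^{N−1}⟩. Define z^i := (u^i × u^{i+1})/√(2δ) for 0 ≤ i ≤ N−1. Then H_δ(u) ≤ 2δ²·Σ_{i=0}^{N−2} ( ‖u^{i+1} − u^i‖²/(2δ) − 1 )² + δ·Σ_{i=0}^{N−2} ‖z^{i+1} − z^i‖². -/

import Mathlib

open MeasureTheory Filter
open scoped RealInnerProductSpace

/-- The cross product on Euclidean `ℝ³`. -/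
noncomputable def cross3 (a b : EuclideanSpace ℝ (Fin 3)) : EuclideanSpace ℝ (Fin 3) :=
  (WithLp.equiv 2 (Fin 3 → ℝ)).symm
    (crossProduct ((WithLp.equiv 2 (Fin 3 → ℝ)) a) ((WithLp.equiv 2 (Fin 3 → ℝ)) b))

/-- Lagrange's identity for cross products on `ℝ³`. -/
lemma cross3_inner_cross3 (a b c d : EuclideanSpace ℝ (Fin 3)) :
    ⟪cross3 a b, cross3 c d⟫ = ⟪a,c⟫*⟪b,d⟫ - ⟪a,d⟫*⟪b,c⟫ := by
  simp [cross3, PiLp.inner_apply, Fin.sum_univ_three, crossProduct,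
    PiLp.toLp_apply,
    Matrix.cons_val_zero, Matrix.cons_val_one, Matrix.head_cons,
    Matrix.cons_val_two, Matrix.tail_cons]
  ring

/-- upper bound of the renormalized chain energy by the discrete
Modica–Mortola functional of the chirality variable `z^i = (u^i × u^{i+1})/√(2δ)`. -/
theorem stmt5 (N : ℕ) (hN : 2 ≤ N) (δ : ℝ) (hδ : δ ∈ Set.Ioo (0 : ℝ) 1)
    (u : ℕ → EuclideanSpace ℝ (Fin 3)) (hu : ∀ i ≤ N, ‖u i‖ = 1)
    (hper : ⟪u 1, u 0⟫ = ⟪u N, u (N - 1)⟫)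
    (z : ℕ → EuclideanSpace ℝ (Fin 3))
    (hz : ∀ i ≤ N - 1, z i = (Real.sqrt (2 * δ))⁻¹ • cross3 (u i) (u (i + 1))) :
    (1 / 2 : ℝ) * ∑ i ∈ Finset.range (N - 1),
        ‖u (i + 2) - (2 * (1 - δ)) • u (i + 1) + u i‖ ^ 2
      ≤ 2 * δ ^ 2 * ∑ i ∈ Finset.range (N - 1),
            (‖u (i + 1) - u i‖ ^ 2 / (2 * δ) - 1) ^ 2
        + δ * ∑ i ∈ Finset.range (N - 1), ‖z (i + 1) - z i‖ ^ 2 := by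
  obtain ⟨hδ0, hδ1⟩ := hδ
  have expand : ∀ x : EuclideanSpace ℝ (Fin 3), ‖x‖ ^ 2 = ⟪x, x⟫ := fun x =>
    (real_inner_self_eq_norm_sq x).symm
  have huu : ∀ i ≤ N, ⟪u i, u i⟫ = (1 : ℝ) := by
    intro i hi
    rw [← expand, hu i hi]; norm_num
  -- Per-term identity for the chain energy
  have hA : ∀ i ∈ Finset.range (N - 1),
      ‖u (i + 2) - (2 * (1 - δ)) • u (i + 1) + u i‖ ^ 2
        = 2 + 2 * ⟪u i, u (i + 2)⟫ + (2 * (1 - δ)) ^ 2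
            - 2 * (2 * (1 - δ)) * (⟪u i, u (i + 1)⟫ + ⟪u (i + 1), u (i + 2)⟫) := by
    intro i hi
    rw [Finset.mem_range] at hi
    rw [expand]
    simp only [inner_add_left, inner_add_right, inner_sub_left, inner_sub_right,
      real_inner_smul_left, real_inner_smul_right]
    rw [huu i (by omega), huu (i + 1) (by omega), huu (i + 2) (by omega),
      real_inner_comm (u (i + 1)) (u i), real_inner_comm (u (i + 2)) (u i),
      real_inner_comm (u (i + 2)) (u (i + 1))]
    ring
  -- Per-term identity for the potential term
  have hB : ∀ i ∈ Finset.range (N - 1),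
      (‖u (i + 1) - u i‖ ^ 2 / (2 * δ) - 1) ^ 2
        = ((2 - 2 * ⟪u i, u (i + 1)⟫) / (2 * δ) - 1) ^ 2 := by
    intro i hi
    rw [Finset.mem_range] at hi
    congr 2
    rw [expand]
    simp only [inner_sub_left, inner_sub_right]
    rw [huu i (by omega), huu (i + 1) (by omega), real_inner_comm (u (i + 1)) (u i)]
    ring
  -- Per-term identity for the chirality term
  have hC : ∀ i ∈ Finset.range (N - 1),
      ‖z (i + 1) - z i‖ ^ 2
        = (2 * δ)⁻¹ * (2 - ⟪u (i + 1), u (i + 2)⟫ ^ 2 - ⟪u i, u (i + 1)⟫ ^ 2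
            - 2 * ⟪u i, u (i + 1)⟫ * ⟪u (i + 1), u (i + 2)⟫ + 2 * ⟪u i, u (i + 2)⟫) := by
    intro i hi
    rw [Finset.mem_range] at hi
    rw [hz (i + 1) (by omega), hz i (by omega), ← smul_sub, norm_smul, mul_pow]
    have h2δ : (0 : ℝ) < 2 * δ := by linarith
    have hsq : ‖(Real.sqrt (2 * δ))⁻¹‖ ^ 2 = (2 * δ)⁻¹ := by
      rw [norm_inv, Real.norm_eq_abs, abs_of_nonneg (Real.sqrt_nonneg _), inv_pow,
        Real.sq_sqrt h2δ.le]
    rw [hsq]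
    congr 1
    rw [expand]
    simp only [inner_sub_left, inner_sub_right, cross3_inner_cross3]
    rw [huu i (by omega), huu (i + 1) (by omega), huu (i + 2) (by omega),
      real_inner_comm (u (i + 1)) (u i), real_inner_comm (u (i + 2)) (u i),
      real_inner_comm (u (i + 2)) (u (i + 1))]
    ring
  rw [Finset.sum_congr rfl hA, Finset.sum_congr rfl hB, Finset.sum_congr rfl hC]
  -- the telescoping function
  set G : ℕ → ℝ := fun j => 2 * (1 - δ) * ⟪u j, u (j + 1)⟫ - ⟪u j, u (j + 1)⟫ ^ 2 with hG
  have hδne : δ ≠ 0 := ne_of_gt hδ0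
  have key : 2 * δ ^ 2 * ∑ i ∈ Finset.range (N - 1),
        ((2 - 2 * ⟪u i, u (i + 1)⟫) / (2 * δ) - 1) ^ 2
      + δ * ∑ i ∈ Finset.range (N - 1),
          (2 * δ)⁻¹ * (2 - ⟪u (i + 1), u (i + 2)⟫ ^ 2 - ⟪u i, u (i + 1)⟫ ^ 2
            - 2 * ⟪u i, u (i + 1)⟫ * ⟪u (i + 1), u (i + 2)⟫ + 2 * ⟪u i, u (i + 2)⟫)
      - (1 / 2 : ℝ) * ∑ i ∈ Finset.range (N - 1),
          (2 + 2 * ⟪u i, u (i + 2)⟫ + (2 * (1 - δ)) ^ 2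
            - 2 * (2 * (1 - δ)) * (⟪u i, u (i + 1)⟫ + ⟪u (i + 1), u (i + 2)⟫))
      = ∑ i ∈ Finset.range (N - 1), (G (i + 1) - G i)
        + ∑ i ∈ Finset.range (N - 1),
            (⟪u i, u (i + 1)⟫ - ⟪u (i + 1), u (i + 2)⟫) ^ 2 / 2 := by
    rw [Finset.mul_sum, Finset.mul_sum, Finset.mul_sum, ← Finset.sum_add_distrib,
      ← Finset.sum_add_distrib, ← Finset.sum_sub_distrib]
    refine Finset.sum_congr rfl fun i _ => ?_
    have h1 : ⟪u (i + 1), u (i + 1 + 1)⟫ = ⟪u (i + 1), u (i + 2)⟫ := by norm_num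
    simp only [hG, h1]
    field_simp
    ring
  have htel : ∑ i ∈ Finset.range (N - 1), (G (i + 1) - G i) = 0 := by
    rw [Finset.sum_range_sub G]
    have hNN : N - 1 + 1 = N := by omega
    have hα : ⟪u (N - 1), u (N - 1 + 1)⟫ = ⟪u 0, u 1⟫ := by
      rw [hNN, real_inner_comm, ← hper, real_inner_comm]
    simp only [hG, hα]
    ring
  have hnn : 0 ≤ ∑ i ∈ Finset.range (N - 1),
      (⟪u i, u (i + 1)⟫ - ⟪u (i + 1), u (i + 2)⟫) ^ 2 / 2 :=
    Finset.sum_nonneg fun i _ => by positivity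
  linarith [key, htel, hnn]
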